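/- Let u be A-superharmonic and finite a.e. in Ω, and suppose the weak Harnack-type conclusion of Lemma 4.17 holds near each point. If u is lower semicontinuous and for every ball B ⊂ Ω and every point x one has u(x) ≤ liminf_{y→x} u(y) ≤ ess liminf_{y→x} u(y), and additionally any A-superharmonic function vanishing a.e. on Ω vanishes identically (Lemma 4.13), then u(x) = liminf_{y→x} u(y) = ess liminf_{y→x} u(y) for every x ∈ Ω. -/

import Mathlib

open Filter MeasureTheory Metric

/-- Lemma 4.14: Let `u` be `A`-superharmonic and finite a.e. in `Ω`.
Given: (i) `u` lower semicontinuous on `Ω`; (ii)+(iii) combined: whenever `u > a − ε`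
a.e. on a ball `B ⊆ Ω` then `u ≥ a − ε` everywhere on `B` (the function
`min{u − a + ε, 0}` is `A`-superharmonic, vanishes a.e. in `B`, hence vanishes
identically by Lemma 4.13); and the inequalities
`u(x) ≤ liminf_{y→x} u(y) ≤ ess liminf_{y→x} u(y)`; then for every `x ∈ Ω`:
`u(x) = liminf_{y→x} u(y) = ess liminf_{y→x} u(y)`, where
`ess liminf_{y→x} u(y) = sup_{r>0} ess inf_{B(x,r)} u`. -/
theorem stmt11 {n : ℕ} (Ω : Set (EuclideanSpace ℝ (Fin n))) (hΩ : IsOpen Ω)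
    (u : EuclideanSpace ℝ (Fin n) → EReal)
    (hlsc : LowerSemicontinuousOn u Ω)
    (hfin : ∀ᵐ x, x ∈ Ω → u x ≠ ⊤)
    (hzero : ∀ a ε : ℝ, 0 < ε → ∀ (x : EuclideanSpace ℝ (Fin n)) (r : ℝ), 0 < r →
      ball x r ⊆ Ω →
      (∀ᵐ y ∂(volume.restrict (ball x r)), ((a - ε : ℝ) : EReal) < u y) →
      ∀ y ∈ ball x r, ((a - ε : ℝ) : EReal) ≤ u y)
    (hle : ∀ x ∈ Ω,
      u x ≤ liminf u (nhdsWithin x (Ω \ {x})) ∧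
      liminf u (nhdsWithin x (Ω \ {x})) ≤
        ⨆ (r : ℝ) (_ : 0 < r), essInf u (volume.restrict (ball x r ∩ Ω))) :
    ∀ x ∈ Ω,
      u x = liminf u (nhdsWithin x (Ω \ {x})) ∧
      liminf u (nhdsWithin x (Ω \ {x})) =
        ⨆ (r : ℝ) (_ : 0 < r), essInf u (volume.restrict (ball x r ∩ Ω)) := by
  intro x hx
  obtain ⟨h1, h2⟩ := hle x hx
  have hS : (⨆ (r : ℝ) (_ : 0 < r), essInf u (volume.restrict (ball x r ∩ Ω))) ≤ u x := by
    refine iSup₂_le fun r hr => ?_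
    by_contra hlt
    push_neg at hlt
    obtain ⟨c, hc1, hc2⟩ := EReal.exists_between_coe_real hlt
    obtain ⟨r0, hr0, hr0Ω⟩ := Metric.isOpen_iff.1 hΩ x hx
    set r' := min r0 r with hr'
    have hr'pos : 0 < r' := lt_min hr0 hr
    have hsub : ball x r' ⊆ Ω := (ball_subset_ball (min_le_left _ _)).trans hr0Ω
    have hsub2 : ball x r' ⊆ ball x r ∩ Ω :=
      fun y hy => ⟨ball_subset_ball (min_le_right _ _) hy, hsub hy⟩
    have hae : ∀ᵐ y ∂(volume.restrict (ball x r ∩ Ω)), ((c : EReal)) < u y :=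
      ae_lt_of_lt_essInf hc2
    have hae' : ∀ᵐ y ∂(volume.restrict (ball x r')), (((c + 1 - 1 : ℝ)) : EReal) < u y := by
      have := ae_mono (Measure.restrict_mono hsub2 le_rfl) hae
      rw [show (c + 1 - 1 : ℝ) = c by ring]
      exact this
    have := hzero (c + 1) 1 one_pos x r' hr'pos hsub hae' x (mem_ball_self hr'pos)
    rw [show (c + 1 - 1 : ℝ) = c by ring] at this
    exact absurd (lt_of_lt_of_le hc1 this) (lt_irrefl _)
  constructor
  · exact le_antisymm h1 (h2.trans hS)
  · exact le_antisymm h2 (hS.trans h1)
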